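/- Let N ≥ 2 be an integer and y : ℤ/Nℤ → ℂ a function with y(−a) = y(a) for all a. For each positive divisor d of N, choose a set T_d ⊆ (ℤ/N_dℤ)^× of representatives for the quotient (ℤ/N_dℤ)^×/{±1}. Then det(C_N·Y_N) = ∏_{d | N} det(G_d), where G_d is the square matrix indexed by u, v ∈ T_d whose (u,v)-entry is d·ŷ_d(u·v^{−1}). -/

import Mathlib

/-- The discrete cosine matrix `C_N`, of size `(N⁺+1) × (N⁺+1)` with `N⁺ = ⌊N/2⌋`. -/
noncomputable def cosMatrix (N : ℕ) : Matrix (Fin (N / 2 + 1)) (Fin (N / 2 + 1)) ℝ :=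
  Matrix.of fun m n =>
    (if (n : ℕ) = 0 ∨ (N % 2 = 0 ∧ (n : ℕ) = N / 2) then (1 / 2 : ℝ) else 1) *
      Real.cos (2 * Real.pi * (m : ℕ) * (n : ℕ) / N)

/-- The matrix `Y_N` attached to an even function `y : ℤ/Nℤ → ℂ`. -/
def YMat (N : ℕ) (y : ZMod N → ℂ) : Matrix (Fin (N / 2 + 1)) (Fin (N / 2 + 1)) ℂ :=
  Matrix.of fun i j => y (((i : ℕ) : ZMod N) * ((j : ℕ) : ZMod N))

/-- `ŷ_d(t) = (1/2)·Σ_{r=1}^{N_d} y(dr mod N)·cos(2πtr/N_d)`, where `N_d = N/d`. -/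
noncomputable def yhat (N d : ℕ) (y : ZMod N → ℂ) (t : ZMod (N / d)) : ℂ :=
  (1 / 2 : ℂ) * ∑ r ∈ Finset.Icc 1 (N / d),
    y (((d * r : ℕ) : ZMod N)) *
      (Real.cos (2 * Real.pi * (ZMod.val t) * r / ((N / d : ℕ) : ℝ)) : ℝ)


open Finset Complex

lemma expsum (d : ℕ) (hd : 0 < d) (m : ℤ) :
    ∑ q ∈ Finset.range d, Complex.exp (2 * Real.pi * I * m * q / d) =
      if (d : ℤ) ∣ m then (d : ℂ) else 0 := by
  have hd' : (d : ℂ) ≠ 0 := Nat.cast_ne_zero.mpr hd.ne'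
  have hexp : ∀ q : ℕ, Complex.exp (2 * Real.pi * I * m * q / d)
      = (Complex.exp (2 * Real.pi * I * m / d)) ^ q := by
    intro q
    rw [← Complex.exp_nat_mul]
    ring_nf
  simp only [hexp]
  by_cases h : (d : ℤ) ∣ m
  · rw [if_pos h]
    obtain ⟨k, hk⟩ := h
    have h1 : Complex.exp (2 * Real.pi * I * m / d) = 1 := by
      have h2 : (2 * Real.pi * I * m / d : ℂ) = k * (2 * Real.pi * I) := by
        field_simp
        push_cast [hk]
        ring
      rw [h2, Complex.exp_int_mul_two_pi_mul_I]
    simp [h1]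
  · rw [if_neg h]
    have hz1 : Complex.exp (2 * Real.pi * I * m / d) ≠ 1 := by
      intro hc
      rw [Complex.exp_eq_one_iff] at hc
      apply h
      obtain ⟨n, hn⟩ := hc
      have h2 : (2 * Real.pi * I : ℂ) ≠ 0 := by
        simp [Real.pi_ne_zero, Complex.I_ne_zero]
      have h3 : (m : ℂ) = n * d := by
        field_simp at hn
        have h4 : (m : ℂ) * (2 * Real.pi * I) = (n * d) * (2 * Real.pi * I) := by
          push_cast
          linear_combination (2 * (Real.pi : ℂ) * I) * hn
        exact mul_right_cancel₀ h2 h4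
      exact Dvd.intro_left n (by exact_mod_cast h3.symm)
    rw [geom_sum_eq hz1]
    have h5 : Complex.exp (2 * Real.pi * I * m / d) ^ d = 1 := by
      rw [← Complex.exp_nat_mul]
      have h6 : (d : ℂ) * (2 * Real.pi * I * m / d) = m * (2 * Real.pi * I) := by
        field_simp
      rw [h6, Complex.exp_int_mul_two_pi_mul_I]
    simp [h5]

lemma cossum (d : ℕ) (hd : 0 < d) (m : ℕ) (θ : ℝ) :
    ∑ q ∈ Finset.range d, ((Real.cos (θ + 2 * Real.pi * m * q / d) : ℝ) : ℂ)
      = if d ∣ m then (d : ℂ) * Real.cos θ else 0 := by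
  have key : ∀ q ∈ Finset.range d, ((Real.cos (θ + 2 * Real.pi * m * q / d) : ℝ) : ℂ)
      = (Complex.exp (θ * I) * Complex.exp (2 * Real.pi * I * (m : ℤ) * q / d)
        + Complex.exp (-θ * I) * Complex.exp (2 * Real.pi * I * (-(m : ℤ)) * q / d)) / 2 := by
    intro q _
    rw [Complex.ofReal_cos]
    show (Complex.exp (((θ + 2 * Real.pi * m * q / d : ℝ) : ℂ) * I)
      + Complex.exp (-((θ + 2 * Real.pi * m * q / d : ℝ) : ℂ) * I)) / 2 = _
    rw [← Complex.exp_add, ← Complex.exp_add]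
    have hd' : (d : ℂ) ≠ 0 := Nat.cast_ne_zero.mpr hd.ne'
    push_cast
    congr 2
    · field_simp
    · field_simp; ring
  rw [Finset.sum_congr rfl key]
  simp only [← Finset.sum_div, Finset.sum_add_distrib, ← Finset.mul_sum]
  have e1 := expsum d hd (m : ℤ)
  have e2 := expsum d hd (-(m : ℤ))
  push_cast at e1 e2
  push_cast
  rw [e1, e2]
  have hiff : ((d : ℤ) ∣ -(m : ℤ)) ↔ d ∣ m := by
    rw [dvd_neg]; exact Int.natCast_dvd_natCast
  by_cases h : d ∣ m
  · rw [if_pos (by exact_mod_cast h), if_pos (hiff.mpr h), if_pos h]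
    rw [show Complex.cos (θ : ℂ) = (Complex.exp (↑θ * I) + Complex.exp (-↑θ * I)) / 2 from rfl]
    ring
  · rw [if_neg (by exact_mod_cast h), if_neg (fun hc => h (hiff.mp hc)), if_neg h]
    simp

noncomputable def cz (e : ℕ) (s : ZMod e) : ℂ :=
  ((Real.cos (2 * Real.pi * (ZMod.val s) / e) : ℝ) : ℂ)

lemma czk (e : ℕ) (he : 0 < e) (k : ℕ) :
    ((Real.cos (2 * Real.pi * k / e) : ℝ) : ℂ) = cz e (k : ZMod e) := by
  haveI : NeZero e := ⟨he.ne'⟩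
  unfold cz
  congr 1
  rw [ZMod.val_natCast]
  conv_lhs => rw [show k = e * (k / e) + k % e from (Nat.div_add_mod k e).symm]
  rw [show (2 * Real.pi * ((e * (k / e) + k % e : ℕ) : ℝ) / e : ℝ)
      = 2 * Real.pi * ((k % e : ℕ) : ℝ) / e + ((k / e : ℕ) : ℝ) * (2 * Real.pi) by
    have : (e : ℝ) ≠ 0 := Nat.cast_ne_zero.mpr he.ne'
    push_cast
    field_simp
    ring]
  rw [Real.cos_add_nat_mul_two_pi]

lemma cz_neg (e : ℕ) (he : 0 < e) (s : ZMod e) : cz e (-s) = cz e s := by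
  haveI : NeZero e := ⟨he.ne'⟩
  unfold cz
  by_cases hs : s = 0
  · simp [hs]
  · rw [ZMod.neg_val, if_neg hs]
    congr 1
    have hv : ZMod.val s ≤ e := (ZMod.val_lt s).le
    rw [show (2 * Real.pi * ((e - ZMod.val s : ℕ) : ℝ) / e : ℝ)
        = 2 * Real.pi - 2 * Real.pi * (ZMod.val s) / e by
      have : (e : ℝ) ≠ 0 := Nat.cast_ne_zero.mpr he.ne'
      rw [Nat.cast_sub hv]
      field_simp]
    exact Real.cos_two_pi_sub _

/-- cast compatibility for `y (d * k)` -/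
lemma cast_dvd_mul (N d : ℕ) (hd : d ∣ N) (hN : 0 < N) (k : ℕ) :
    ((d * ((k : ZMod (N / d)).val) : ℕ) : ZMod N) = ((d * k : ℕ) : ZMod N) := by
  have hd0 : 0 < d := Nat.pos_of_dvd_of_pos hd hN
  have he0 : 0 < N / d := Nat.div_pos (Nat.le_of_dvd hN hd) hd0
  haveI : NeZero (N / d) := ⟨he0.ne'⟩
  rw [ZMod.natCast_eq_natCast_iff, ZMod.val_natCast]
  have h1 : k % (N / d) ≡ k [MOD N / d] := Nat.mod_modEq k (N / d)
  have h2 := h1.mul_left' (c := d)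
  rwa [Nat.mul_div_cancel' hd] at h2


lemma fold (N : ℕ) (hN : 1 ≤ N) (f : ℕ → ℂ)
    (hf : ∀ n, 1 ≤ n → n < N → f (N - n) = f n) :
    ∑ n ∈ Finset.range (N / 2 + 1),
      (if n = 0 ∨ (N % 2 = 0 ∧ n = N / 2) then (1 / 2 : ℂ) else 1) * f n
      = (1 / 2 : ℂ) * ∑ n ∈ Finset.range N, f n := by
  have hsplit : ∑ n ∈ Finset.range N, f n
      = ∑ n ∈ Finset.range (N / 2 + 1), f n + ∑ n ∈ Finset.Ico (N / 2 + 1) N, f n := by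
    rw [Finset.range_eq_Ico, ← Finset.sum_Ico_consecutive f (by omega : 0 ≤ N / 2 + 1) (by omega : N / 2 + 1 ≤ N), Finset.range_eq_Ico]
  have hrefl : ∑ n ∈ Finset.Ico (N / 2 + 1) N, f n
      = ∑ n ∈ Finset.Ico 1 (N - N / 2), f n := by
    refine Finset.sum_nbij' (fun n => N - n) (fun n => N - n) ?_ ?_ ?_ ?_ ?_
    · intro a ha; simp only [Finset.mem_Ico] at *; omega
    · intro a ha; simp only [Finset.mem_Ico] at *; omega
    · intro a ha; simp only [Finset.mem_Ico] at ha; show N - (N - a) = a; omega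
    · intro a ha; simp only [Finset.mem_Ico] at ha; show N - (N - a) = a; omega
    · intro a ha
      simp only [Finset.mem_Ico] at ha
      show f a = f (N - a)
      conv_rhs => rw [← hf (N - a) (by omega) (by omega), show N - (N - a) = a by omega]
  rw [hsplit, hrefl]
  have hbot : ∀ g : ℕ → ℂ, ∑ n ∈ Finset.range (N / 2 + 1), g n
      = g 0 + ∑ n ∈ Finset.Ico 1 (N / 2 + 1), g n := by
    intro g
    rw [Finset.range_eq_Ico, Finset.sum_eq_sum_Ico_succ_bot (by omega)]
  rcases Nat.even_or_odd N with he | ho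
  · -- N even
    have h2 : N % 2 = 0 := Nat.even_iff.mp he
    have hN2 : 1 ≤ N / 2 := by omega
    have hNN : N - N / 2 = N / 2 := by omega
    rw [hNN, hbot, hbot]
    rw [show N / 2 + 1 = (N / 2) + 1 from rfl, Finset.sum_Ico_succ_top (by omega),
      Finset.sum_Ico_succ_top (a := 1) (by omega)]
    have hone : ∀ n ∈ Finset.Ico 1 (N / 2),
        (if n = 0 ∨ (N % 2 = 0 ∧ n = N / 2) then (1 / 2 : ℂ) else 1) * f n = f n := by
      intro n hn
      simp only [Finset.mem_Ico] at hn
      rw [if_neg (by omega), one_mul]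
    rw [Finset.sum_congr rfl hone]
    rw [if_pos (Or.inl rfl), if_pos (Or.inr ⟨h2, rfl⟩)]
    ring
  · -- N odd
    have h2 : N % 2 = 1 := Nat.odd_iff.mp ho
    have hNN : N - N / 2 = N / 2 + 1 := by omega
    rw [hNN, hbot, hbot]
    have hone : ∀ n ∈ Finset.Ico 1 (N / 2 + 1),
        (if n = 0 ∨ (N % 2 = 0 ∧ n = N / 2) then (1 / 2 : ℂ) else 1) * f n = f n := by
      intro n hn
      simp only [Finset.mem_Ico] at hn
      rw [if_neg (by omega), one_mul]
    rw [Finset.sum_congr rfl hone]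
    rw [if_pos (Or.inl rfl)]
    ring




lemma yhat_eq (N d : ℕ) [NeZero (N / d)] (hd : d ∣ N) (hN : 0 < N) (y : ZMod N → ℂ) (t : ZMod (N / d)) :
    yhat N d y t = (1 / 2 : ℂ) * ∑ r : ZMod (N / d),
      y (((d * r.val : ℕ) : ZMod N)) * cz (N / d) (t * r) := by
  have hd0 : 0 < d := Nat.pos_of_dvd_of_pos hd hN
  have he0 : 0 < N / d := Nat.div_pos (Nat.le_of_dvd hN hd) hd0
  unfold yhat
  congr 1
  refine Finset.sum_nbij' (fun r => (r : ZMod (N / d)))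
    (fun s => if s.val = 0 then N / d else s.val) (fun a _ => Finset.mem_univ _)
    ?_ ?_ ?_ ?_
  · intro s _
    simp only [Finset.mem_Icc]
    split
    · exact ⟨he0, le_refl _⟩
    · exact ⟨Nat.one_le_iff_ne_zero.mpr (by assumption), (ZMod.val_lt s).le⟩
  · intro r hr
    simp only [Finset.mem_Icc] at hr
    rw [ZMod.val_natCast]
    rcases eq_or_lt_of_le hr.2 with h | h
    · simp [h, Nat.mod_self]
    · rw [Nat.mod_eq_of_lt h, if_neg (Nat.one_le_iff_ne_zero.mp hr.1)]
  · intro s _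
    split
    · rename_i h
      rw [ZMod.natCast_self]
      exact ((ZMod.val_eq_zero s).mp h).symm
    · exact ZMod.natCast_rightInverse s
  · intro r hr
    congr 1
    · exact (congrArg y (cast_dvd_mul N d hd hN r)).symm
    · rw [show (2 * Real.pi * (ZMod.val t) * r / ((N / d : ℕ) : ℝ) : ℝ)
          = 2 * Real.pi * ((ZMod.val t * r : ℕ) : ℝ) / ((N / d : ℕ) : ℝ) by
        push_cast; ring]
      rw [czk (N / d) he0]
      congr 1
      push_cast
      rw [ZMod.natCast_rightInverse t]

lemma yhat_neg (N d : ℕ) (hd : d ∣ N) (hN : 0 < N) (y : ZMod N → ℂ) (t : ZMod (N / d)) :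
    yhat N d y (-t) = yhat N d y t := by
  have hd0 : 0 < d := Nat.pos_of_dvd_of_pos hd hN
  have he0 : 0 < N / d := Nat.div_pos (Nat.le_of_dvd hN hd) hd0
  haveI : NeZero (N / d) := ⟨he0.ne'⟩
  rw [yhat_eq N d hd hN, yhat_eq N d hd hN]
  congr 1
  refine Finset.sum_congr rfl fun r _ => ?_
  rw [show (-t) * r = -(t * r) by ring, cz_neg _ he0]

lemma entryMain (N : ℕ) (hN : 2 ≤ N) (y : ZMod N → ℂ) (hy : ∀ a, y (-a) = y a)
    (d j' : ℕ) (hd : d ∣ N) (hd0 : 0 < d) (w : (ZMod (N / d))ˣ)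
    (hw : ((w : (ZMod (N / d))ˣ) : ZMod (N / d)) = ((j' : ℕ) : ZMod (N / d)))
    (mi ji : Fin (N / 2 + 1)) (hji : (ji : ℕ) = d * j') :
    ((cosMatrix N).map (fun r => (r : ℂ)) * YMat N y) mi ji =
      if d ∣ (mi : ℕ) then
        (d : ℂ) * yhat N d y ((((mi : ℕ) / d : ℕ) : ZMod (N / d)) *
          ((w⁻¹ : (ZMod (N / d))ˣ) : ZMod (N / d))) else 0 := by
  have hN0 : 0 < N := by omega
  have he0 : 0 < (N / d) := Nat.div_pos (Nat.le_of_dvd hN0 hd) hd0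
  haveI : NeZero (N / d) := ⟨he0.ne'⟩
  have hde : d * (N / d) = N := Nat.mul_div_cancel' hd
  have hNde : (N : ℝ) = (d : ℝ) * ((N / d : ℕ) : ℝ) := by exact_mod_cast hde.symm
  have hdR : (d : ℝ) ≠ 0 := Nat.cast_ne_zero.mpr hd0.ne'
  have heR : ((N / d : ℕ) : ℝ) ≠ 0 := Nat.cast_ne_zero.mpr he0.ne'
  have hNR : (N : ℝ) ≠ 0 := Nat.cast_ne_zero.mpr hN0.ne'
  set f : ℕ → ℂ := fun n =>
    ((Real.cos (2 * Real.pi * (mi : ℕ) * n / N) : ℝ) : ℂ) *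
      y ((n : ZMod N) * (((ji : ℕ) : ZMod N))) with hf
  -- step 1 : entry = (1/2) * ∑_{n < N} f n
  have step1 : ((cosMatrix N).map (fun r => (r : ℂ)) * YMat N y) mi ji
      = (1 / 2 : ℂ) * ∑ n ∈ Finset.range N, f n := by
    rw [Matrix.mul_apply]
    have hterm : ∀ n : Fin (N / 2 + 1),
        ((cosMatrix N).map (fun r => (r : ℂ))) mi n * YMat N y n ji
          = (if (n : ℕ) = 0 ∨ (N % 2 = 0 ∧ (n : ℕ) = N / 2) then (1 / 2 : ℂ) else 1) *
            f (n : ℕ) := by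
      intro n
      simp only [cosMatrix, YMat, Matrix.map_apply, Matrix.of_apply, hf]
      push_cast [apply_ite ((↑) : ℝ → ℂ)]
      ring
    rw [Finset.sum_congr rfl (fun n _ => hterm n)]
    rw [show ∑ n : Fin (N / 2 + 1),
        (if (n : ℕ) = 0 ∨ (N % 2 = 0 ∧ (n : ℕ) = N / 2) then (1 / 2 : ℂ) else 1) * f (n : ℕ)
        = ∑ n ∈ Finset.range (N / 2 + 1),
          (if n = 0 ∨ (N % 2 = 0 ∧ n = N / 2) then (1 / 2 : ℂ) else 1) * f n from
      Fin.sum_univ_eq_sum_range (fun n => (if n = 0 ∨ (N % 2 = 0 ∧ n = N / 2) then (1 / 2 : ℂ) else 1) * f n) (N / 2 + 1)]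
    refine fold N (by omega) f ?_
    intro n h1 h2
    simp only [hf]
    congr 1
    · congr 1
      rw [show ((N - n : ℕ) : ℝ) = (N : ℝ) - n from by
        push_cast [Nat.cast_sub h2.le]; ring]
      rw [show (2 * Real.pi * (mi : ℕ) * ((N:ℝ) - n) / N : ℝ)
          = (mi : ℕ) * (2 * Real.pi) - 2 * Real.pi * (mi : ℕ) * n / N by
        field_simp]
      exact Real.cos_nat_mul_two_pi_sub _ _
    · rw [show ((N - n : ℕ) : ZMod N) = -(n : ZMod N) from by
        push_cast [Nat.cast_sub h2.le]; simp]
      rw [show (-(n : ZMod N)) * (((ji:ℕ) : ZMod N)) = -((n : ZMod N) * ((ji:ℕ) : ZMod N)) by ring]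
      exact hy _
  rw [step1]
  -- step 2: split the sum
  have step2a : ∑ n ∈ Finset.range N, f n
      = ∑ p ∈ Finset.range (N / d) ×ˢ Finset.range d, f (p.2 * (N / d) + p.1) := by
    refine Finset.sum_nbij' (fun n => ((n % (N / d), n / (N / d)) : ℕ × ℕ))
      (fun p => p.2 * (N / d) + p.1) ?_ ?_ ?_ ?_ ?_
    · intro n hn
      simp only [Finset.mem_range, Finset.mem_product] at *
      refine ⟨Nat.mod_lt _ he0, ?_⟩
      rw [Nat.div_lt_iff_lt_mul he0]
      omega
    · intro p hp
      simp only [Finset.mem_range, Finset.mem_product] at *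
      have h1 : (p.2 + 1) * (N / d) ≤ d * (N / d) := Nat.mul_le_mul_right (N / d) (by omega)
      rw [Nat.succ_mul] at h1
      omega
    · intro n hn
      show (n / (N / d)) * (N / d) + n % (N / d) = n
      rw [mul_comm]
      exact Nat.div_add_mod n (N / d)
    · intro p hp
      simp only [Finset.mem_range, Finset.mem_product] at hp
      ext
      · show (p.2 * (N / d) + p.1) % (N / d) = p.1
        rw [mul_comm, Nat.mul_add_mod, Nat.mod_eq_of_lt hp.1]
      · show (p.2 * (N / d) + p.1) / (N / d) = p.2
        rw [mul_comm, Nat.mul_add_div he0, Nat.div_eq_of_lt hp.1, add_zero]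
    · intro n hn
      show f n = f ((n / (N / d)) * (N / d) + n % (N / d))
      rw [mul_comm, Nat.div_add_mod n (N / d)]
  rw [step2a, Finset.sum_product]
  -- step 3: rewrite each term
  have step3 : ∀ r ∈ Finset.range (N / d), ∀ q ∈ Finset.range d, f (q * (N / d) + r)
      = ((Real.cos ((2 * Real.pi * (mi : ℕ) * r / N) + 2 * Real.pi * (mi : ℕ) * q / d) : ℝ) : ℂ)
        * y (((d * (r * j') : ℕ) : ZMod N)) := by
    intro r _ q _
    simp only [hf]
    congr 1
    · congr 1
      congr 1
      rw [hNde]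
      push_cast
      field_simp
      ring
    · congr 1
      rw [hji]
      push_cast
      have h0 : ((d : ZMod N) * ((N / d : ℕ) : ZMod N)) = 0 := by
        rw [← Nat.cast_mul, hde, ZMod.natCast_self]
      linear_combination ((q : ZMod N) * j') * h0
  rw [Finset.sum_congr rfl (fun r hr => Finset.sum_congr rfl (step3 r hr))]
  have step4 : ∀ r ∈ Finset.range (N / d),
      ∑ q ∈ Finset.range d,
        ((Real.cos ((2 * Real.pi * (mi : ℕ) * r / N) + 2 * Real.pi * (mi : ℕ) * q / d) : ℝ) : ℂ)
          * y (((d * (r * j') : ℕ) : ZMod N))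
      = (if d ∣ (mi : ℕ) then (d : ℂ) * Real.cos (2 * Real.pi * (mi : ℕ) * r / N) else 0)
          * y (((d * (r * j') : ℕ) : ZMod N)) := by
    intro r _
    rw [← Finset.sum_mul, cossum d hd0 (mi : ℕ) _]
  rw [Finset.sum_congr rfl step4]
  by_cases hdm : d ∣ (mi : ℕ)
  · rw [if_pos hdm]
    obtain ⟨mb, hm⟩ := hdm
    have hmd : (mi : ℕ) / d = mb := by rw [hm, Nat.mul_div_cancel_left _ hd0]
    have step5 : ∀ r ∈ Finset.range (N / d),
        (if d ∣ (mi : ℕ) then (d : ℂ) * Real.cos (2 * Real.pi * (mi : ℕ) * r / N) else 0)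
          * y (((d * (r * j') : ℕ) : ZMod N))
        = ((d : ℂ) * cz (N / d) ((mb : ZMod (N / d)) * (r : ZMod (N / d))))
          * y (((d * ZMod.val ((r : ZMod (N / d)) * ((w : (ZMod (N / d))ˣ) : ZMod (N / d))) : ℕ) : ZMod N)) := by
      intro r _
      rw [if_pos ⟨mb, hm⟩]
      congr 1
      · congr 1
        rw [show (2 * Real.pi * (mi : ℕ) * r / N : ℝ) = 2 * Real.pi * ((mb * r : ℕ) : ℝ) / ((N / d : ℕ) : ℝ) by
          rw [hm, hNde]; push_cast; field_simp]
        rw [czk (N / d) he0 (mb * r)]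
        push_cast
        rfl
      · congr 1
        rw [hw]
        rw [show ((r : ZMod (N / d)) * ((j' : ℕ) : ZMod (N / d))) = (((r * j' : ℕ) : ZMod (N / d))) by push_cast; ring]
        exact (cast_dvd_mul N d hd hN0 (r * j')).symm
    rw [Finset.sum_congr rfl step5]
    -- convert to sum over ZMod (N / d)
    have step6 : ∑ r ∈ Finset.range (N / d),
        ((d : ℂ) * cz (N / d) ((mb : ZMod (N / d)) * (r : ZMod (N / d))))
          * y (((d * ZMod.val ((r : ZMod (N / d)) * ((w : (ZMod (N / d))ˣ) : ZMod (N / d))) : ℕ) : ZMod N))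
        = ∑ s : ZMod (N / d), ((d : ℂ) * cz (N / d) ((mb : ZMod (N / d)) * s))
          * y (((d * ZMod.val (s * ((w : (ZMod (N / d))ˣ) : ZMod (N / d))) : ℕ) : ZMod N)) := by
      refine Finset.sum_nbij' (fun r => (r : ZMod (N / d))) (fun s => s.val)
        (fun a _ => Finset.mem_univ _) ?_ ?_ ?_ ?_
      · intro s _
        exact Finset.mem_range.mpr (ZMod.val_lt s)
      · intro r hr
        show ZMod.val ((r : ℕ) : ZMod (N / d)) = r
        rw [ZMod.val_natCast, Nat.mod_eq_of_lt (Finset.mem_range.mp hr)]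
      · intro s _
        exact ZMod.natCast_rightInverse s
      · intro r _
        rfl
    rw [step6]
    -- substitute s ↦ s * w
    have step7 : ∑ s : ZMod (N / d), ((d : ℂ) * cz (N / d) ((mb : ZMod (N / d)) * s))
          * y (((d * ZMod.val (s * ((w : (ZMod (N / d))ˣ) : ZMod (N / d))) : ℕ) : ZMod N))
        = ∑ u : ZMod (N / d), ((d : ℂ) * cz (N / d) ((((mb : ℕ) : ZMod (N / d)) * ((w⁻¹ : (ZMod (N / d))ˣ) : ZMod (N / d))) * u))
          * y (((d * ZMod.val u : ℕ) : ZMod N)) := by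
      refine Finset.sum_nbij' (fun s => s * ((w : (ZMod (N / d))ˣ) : ZMod (N / d)))
        (fun u => u * (((w⁻¹ : (ZMod (N / d))ˣ)) : ZMod (N / d)))
        (fun a _ => Finset.mem_univ _) (fun a _ => Finset.mem_univ _) ?_ ?_ ?_
      · intro s _
        show s * _ * _ = s
        rw [mul_assoc, Units.mul_inv, mul_one]
      · intro u _
        show u * _ * _ = u
        rw [mul_assoc, Units.inv_mul, mul_one]
      · intro s _
        congr 2
        rw [show (((mb : ℕ) : ZMod (N / d)) * ((w⁻¹ : (ZMod (N / d))ˣ) : ZMod (N / d))) * (s * ((w : (ZMod (N / d))ˣ) : ZMod (N / d)))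
            = (mb : ZMod (N / d)) * s * ((((w⁻¹ : (ZMod (N / d))ˣ)) : ZMod (N / d)) * ((w : (ZMod (N / d))ˣ) : ZMod (N / d))) by
          ring]
        rw [Units.inv_mul, mul_one]
    rw [step7]
    rw [yhat_eq N d hd hN0 y]
    rw [hmd]
    rw [Finset.mul_sum]
    rw [Finset.mul_sum]
    rw [Finset.mul_sum]
    exact Finset.sum_congr rfl fun u _ => by ring
  · rw [if_neg hdm]
    simp only [if_neg hdm, zero_mul, Finset.sum_const_zero, mul_zero]

lemma reps_eq (e : ℕ) (he : 0 < e) (x x' : ℕ) (hx : x ≤ e / 2) (hx' : x' ≤ e / 2)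
    (h : ((x : ZMod e) = (x' : ZMod e)) ∨ ((x : ZMod e) = -((x' : ℕ) : ZMod e))) : x = x' := by
  rcases h with h | h
  · have h1 : x % e = x' % e := (ZMod.natCast_eq_natCast_iff x x' e).mp h
    rw [Nat.mod_eq_of_lt (by omega), Nat.mod_eq_of_lt (by omega)] at h1
    exact h1
  · have h2 : ((x + x' : ℕ) : ZMod e) = 0 := by push_cast; rw [h]; ring
    have h3 : e ∣ x + x' := (ZMod.natCast_eq_zero_iff _ _).mp h2
    rcases Nat.eq_zero_or_pos (x + x') with h5 | h5
    · omega
    · have h6 := Nat.le_of_dvd h5 h3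
      omega


/-- `det(C_N·Y_N) = ∏_{d ∣ N} det G_d`, where for each positive divisor `d` of `N`
and a chosen set `T_d ⊆ (ℤ/N_dℤ)ˣ` of representatives of `(ℤ/N_dℤ)ˣ/{±1}`,
`G_d` is the matrix indexed by `u, v ∈ T_d` with `(u,v)` entry `d·ŷ_d(u·v⁻¹)`. -/
theorem det_cosMatrix_mul_YMat (N : ℕ) (hN : 2 ≤ N) (y : ZMod N → ℂ)
    (hy : ∀ a : ZMod N, y (-a) = y a)
    (T : (d : ℕ) → Finset (ZMod (N / d))ˣ)
    (hT : ∀ d ∈ N.divisors, ∀ w : (ZMod (N / d))ˣ,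
      ∃! u : (ZMod (N / d))ˣ, u ∈ T d ∧ (u = w ∨ u = -w)) :
    ((cosMatrix N).map (fun r => (r : ℂ)) * YMat N y).det =
      ∏ d ∈ N.divisors,
        Matrix.det (Matrix.of fun u v : {u : (ZMod (N / d))ˣ // u ∈ T d} =>
          (d : ℂ) * yhat N d y (((u : (ZMod (N / d))ˣ) * (v : (ZMod (N / d))ˣ)⁻¹ :
            (ZMod (N / d))ˣ) : ZMod (N / d))) := by
  classical
  have hN0 : 0 < N := by omega
  set M := ((cosMatrix N).map (fun r => (r : ℂ)) * YMat N y) with hM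
  set b : Fin (N / 2 + 1) → ℕ := fun i => N / Nat.gcd (i : ℕ) N with hb
  have hgdvd : ∀ i : Fin (N / 2 + 1), Nat.gcd (i : ℕ) N ∣ N :=
    fun i => Nat.gcd_dvd_right _ _
  have hgpos : ∀ i : Fin (N / 2 + 1), 0 < Nat.gcd (i : ℕ) N :=
    fun i => Nat.gcd_pos_of_pos_right _ hN0
  -- generic entry description
  have hEntry : ∀ (mi ji : Fin (N / 2 + 1)),
      M mi ji = if Nat.gcd (ji : ℕ) N ∣ (mi : ℕ) then
        ((Nat.gcd (ji : ℕ) N : ℕ) : ℂ) * yhat N (Nat.gcd (ji : ℕ) N) y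
          ((((mi : ℕ) / (Nat.gcd (ji : ℕ) N) : ℕ) : ZMod (N / (Nat.gcd (ji : ℕ) N))) *
            (((ZMod.unitOfCoprime ((ji : ℕ) / Nat.gcd (ji : ℕ) N)
              (Nat.coprime_div_gcd_div_gcd (hgpos ji)))⁻¹ :
                (ZMod (N / (Nat.gcd (ji : ℕ) N)))ˣ) : ZMod (N / (Nat.gcd (ji : ℕ) N))))
        else 0 := by
    intro mi ji
    exact entryMain N hN y hy (Nat.gcd (ji : ℕ) N) ((ji : ℕ) / Nat.gcd (ji : ℕ) N)
      (hgdvd ji) (hgpos ji) _ (ZMod.coe_unitOfCoprime _ _) mi ji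
      (Nat.mul_div_cancel' (Nat.gcd_dvd_left _ _)).symm
  -- helper : divisibility of quotients
  have hdivdvd : ∀ a c : ℕ, a ∣ c → c ∣ N → N / c ∣ N / a := by
    intro a c hac hcN
    have hc0 : 0 < c := Nat.pos_of_dvd_of_pos hcN hN0
    refine ⟨c / a, ?_⟩
    rw [Nat.div_mul_div_comm hcN hac, mul_comm N c, Nat.mul_div_mul_left _ _ hc0]
  -- block triangularity
  have hBT : M.BlockTriangular b := by
    intro i j hlt
    rw [hEntry i j]
    rw [if_neg]
    intro hdvd
    have h1 : Nat.gcd (j : ℕ) N ∣ Nat.gcd (i : ℕ) N := Nat.dvd_gcd hdvd (hgdvd j)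
    have h2 : N / Nat.gcd (i : ℕ) N ∣ N / Nat.gcd (j : ℕ) N := hdivdvd _ _ h1 (hgdvd i)
    have h3 : 0 < N / Nat.gcd (j : ℕ) N :=
      Nat.div_pos (Nat.le_of_dvd hN0 (hgdvd j)) (hgpos j)
    exact absurd (Nat.le_of_dvd h3 h2) (not_le.mpr hlt)
  rw [hBT.det]
  -- the image of b is the set of divisors
  have himage : Finset.image b Finset.univ = N.divisors := by
    ext a
    simp only [Finset.mem_image, Finset.mem_univ, true_and, Nat.mem_divisors]
    constructor
    · rintro ⟨i, rfl⟩
      exact ⟨⟨Nat.gcd (i : ℕ) N, (Nat.div_mul_cancel (hgdvd i)).symm⟩, hN0.ne'⟩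
    · rintro ⟨haN, -⟩
      have ha0 : 0 < a := Nat.pos_of_dvd_of_pos haN hN0
      by_cases h1 : a = 1
      · refine ⟨⟨0, by omega⟩, ?_⟩
        show N / Nat.gcd 0 N = a
        rw [Nat.gcd_zero_left, Nat.div_self hN0, h1]
      · set dd := N / a with hdd
        have hddN : dd ∣ N := Nat.div_dvd_of_dvd haN
        have hdd0 : 0 < dd := Nat.div_pos (Nat.le_of_dvd hN0 haN) ha0
        have hdd2 : 2 * dd ≤ N := by
          have h2a : 2 ≤ a := by omega
          calc 2 * dd ≤ a * dd := Nat.mul_le_mul_right dd h2a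
          _ = N := by rw [hdd, mul_comm, Nat.div_mul_cancel haN]
        refine ⟨⟨dd, by omega⟩, ?_⟩
        show N / Nat.gcd dd N = a
        rw [Nat.gcd_eq_left hddN, hdd, Nat.div_div_self haN hN0.ne']
  rw [himage]
  rw [← Nat.prod_div_divisors N (fun a => (M.toSquareBlock b a).det)]
  refine Finset.prod_congr rfl fun d hd => ?_
  have hdN : d ∣ N := (Nat.mem_divisors.mp hd).1
  have hd0 : 0 < d := Nat.pos_of_dvd_of_pos hdN hN0
  have he0 : 0 < N / d := Nat.div_pos (Nat.le_of_dvd hN0 hdN) hd0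
  haveI : NeZero (N / d) := ⟨he0.ne'⟩
  have hde : d * (N / d) = N := Nat.mul_div_cancel' hdN
  have hbiff : ∀ i : Fin (N / 2 + 1), b i = N / d ↔ Nat.gcd (i : ℕ) N = d := by
    intro i
    constructor
    · intro h
      have h1 : N / (N / Nat.gcd (i : ℕ) N) = Nat.gcd (i : ℕ) N :=
        Nat.div_div_self (hgdvd i) hN0.ne'
      rw [show b i = N / Nat.gcd (i : ℕ) N from rfl] at h
      rw [← h1, h, Nat.div_div_self hdN hN0.ne']
    · intro h
      show N / _ = N / d
      rw [h]
  have hcop : ∀ i : Fin (N / 2 + 1), Nat.gcd (i : ℕ) N = d →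
      Nat.Coprime ((i : ℕ) / d) (N / d) := by
    intro i h
    rw [← h]
    exact Nat.coprime_div_gcd_div_gcd (hgpos i)
  have hhalf : ∀ i : Fin (N / 2 + 1), (i : ℕ) / d ≤ (N / d) / 2 := by
    intro i
    have h1 : (i : ℕ) ≤ N / 2 := by omega
    calc (i : ℕ) / d ≤ (N / 2) / d := Nat.div_le_div_right h1
    _ = N / (2 * d) := Nat.div_div_eq_div_mul N 2 d
    _ = N / (d * 2) := by rw [mul_comm 2 d]
    _ = (N / d) / 2 := (Nat.div_div_eq_div_mul N d 2).symm
  have hdvdI : ∀ i : {i : Fin (N / 2 + 1) // b i = N / d}, d ∣ ((i : Fin (N / 2 + 1)) : ℕ) := by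
    intro i
    have h := (hbiff i.1).mp i.2
    have h2 := Nat.gcd_dvd_left ((i : Fin (N / 2 + 1)) : ℕ) N
    rwa [h] at h2
  set Φ : {i : Fin (N / 2 + 1) // b i = N / d} → (ZMod (N / d))ˣ :=
    fun i => ZMod.unitOfCoprime ((i.1 : ℕ) / d) (hcop i.1 ((hbiff i.1).mp i.2)) with hΦ
  set ψ : {i : Fin (N / 2 + 1) // b i = N / d} → {u : (ZMod (N / d))ˣ // u ∈ T d} :=
    fun i => ⟨(hT d hd (Φ i)).exists.choose, ((hT d hd (Φ i)).exists.choose_spec).1⟩ with hψ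
  have hψspec : ∀ i, (ψ i : (ZMod (N / d))ˣ) = Φ i ∨ (ψ i : (ZMod (N / d))ˣ) = -Φ i :=
    fun i => ((hT d hd (Φ i)).exists.choose_spec).2
  have hΦval : ∀ i, ((Φ i : (ZMod (N / d))ˣ) : ZMod (N / d)) = (((i.1 : ℕ) / d : ℕ) : ZMod (N / d)) :=
    fun i => ZMod.coe_unitOfCoprime _ _
  have hΦinj : ∀ i i' : {i : Fin (N / 2 + 1) // b i = N / d},
      (Φ i = Φ i' ∨ Φ i = -Φ i') → i = i' := by
    intro i i' hcase
    have hx : ((((i.1 : ℕ) / d : ℕ) : ZMod (N / d)) = (((i'.1 : ℕ) / d : ℕ) : ZMod (N / d)))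
        ∨ ((((i.1 : ℕ) / d : ℕ) : ZMod (N / d)) = -(((i'.1 : ℕ) / d : ℕ) : ZMod (N / d))) := by
      rcases hcase with h | h
      · left
        rw [← hΦval i, ← hΦval i', h]
      · right
        rw [← hΦval i, ← hΦval i', h]
        exact Units.val_neg _
    have heq : (i.1 : ℕ) / d = (i'.1 : ℕ) / d :=
      reps_eq (N / d) he0 _ _ (hhalf i.1) (hhalf i'.1) hx
    have hi : (i.1 : ℕ) = (i'.1 : ℕ) := by
      rw [← Nat.mul_div_cancel' (hdvdI i), heq, Nat.mul_div_cancel' (hdvdI i')]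
    exact Subtype.ext (Fin.ext hi)
  have hbij : Function.Bijective ψ := by
    constructor
    · intro i i' h
      have hval : (ψ i : (ZMod (N / d))ˣ) = (ψ i' : (ZMod (N / d))ˣ) := by rw [h]
      apply hΦinj
      rcases hψspec i with h1 | h1 <;> rcases hψspec i' with h2 | h2
      · left; rw [← h1, ← h2, hval]
      · right; rw [← h1, ← h2, hval]
      · right; rw [← h2, ← hval, h1, neg_neg]
      · left
        have := hval
        rw [h1, h2] at this
        exact neg_injective this
    · rintro ⟨u, hu⟩
      set x : ℕ := (((u : (ZMod (N / d))ˣ) : ZMod (N / d))).val with hxdef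
      have hxe : x < N / d := ZMod.val_lt _
      set x' : ℕ := if x ≤ (N / d) / 2 then x else N / d - x with hx'def
      have hx'half : x' ≤ (N / d) / 2 := by
        rw [hx'def]
        split <;> omega
      have hcast : ((x' : ℕ) : ZMod (N / d)) = ((u : (ZMod (N / d))ˣ) : ZMod (N / d))
          ∨ ((x' : ℕ) : ZMod (N / d)) = -((u : (ZMod (N / d))ˣ) : ZMod (N / d)) := by
        rw [hx'def]
        split
        · left
          exact ZMod.natCast_rightInverse _
        · right
          rw [Nat.cast_sub hxe.le, ZMod.natCast_self]
          rw [show (((x : ℕ) : ZMod (N / d))) = ((u : (ZMod (N / d))ˣ) : ZMod (N / d)) from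
            ZMod.natCast_rightInverse _]
          ring
      have hx'cop : Nat.Coprime x' (N / d) := by
        have hun : IsUnit ((x' : ℕ) : ZMod (N / d)) := by
          rcases hcast with h | h
          · rw [h]; exact Units.isUnit u
          · rw [h]; exact (Units.isUnit u).neg
        exact (ZMod.isUnit_iff_coprime x' (N / d)).mp hun
      have hile : d * x' ≤ N / 2 := by
        calc d * x' ≤ d * ((N / d) / 2) := Nat.mul_le_mul_left d hx'half
        _ ≤ (d * (N / d)) / 2 := Nat.mul_div_le_mul_div_assoc _ _ _
        _ = N / 2 := by rw [hde]
      have hgcdi : Nat.gcd (d * x') N = d := by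
        conv_lhs => rw [← hde]
        rw [Nat.gcd_mul_left, Nat.Coprime.gcd_eq_one hx'cop, mul_one]
      set i : {i : Fin (N / 2 + 1) // b i = N / d} :=
        ⟨⟨d * x', by omega⟩, by
          apply (hbiff _).mpr
          exact hgcdi⟩ with hidef
      have hΦi : ((Φ i : (ZMod (N / d))ˣ) : ZMod (N / d)) = ((x' : ℕ) : ZMod (N / d)) := by
        rw [hΦval i]
        congr 1
        show d * x' / d = x'
        exact Nat.mul_div_cancel_left x' hd0
      have hor : Φ i = u ∨ Φ i = -u := by
        rcases hcast with h | h
        · left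
          exact Units.ext (by rw [hΦi, h])
        · right
          exact Units.ext (by rw [hΦi, h, Units.val_neg])
      have huniq := (hT d hd (Φ i)).unique ((hT d hd (Φ i)).exists.choose_spec)
        ⟨hu, by
          rcases hor with h | h
          · left; rw [h]
          · right; rw [h, neg_neg]⟩
      exact ⟨i, Subtype.ext huniq⟩
  set σ : {i : Fin (N / 2 + 1) // b i = N / d} ≃ {u : (ZMod (N / d))ˣ // u ∈ T d} :=
    Equiv.ofBijective ψ hbij with hσ
  have hblock : M.toSquareBlock b (N / d) =
      (Matrix.of fun u v : {u : (ZMod (N / d))ˣ // u ∈ T d} =>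
          (d : ℂ) * yhat N d y (((u : (ZMod (N / d))ˣ) * (v : (ZMod (N / d))ˣ)⁻¹ :
            (ZMod (N / d))ˣ) : ZMod (N / d))).submatrix σ σ := by
    ext i j
    show M i.1 j.1 = (d : ℂ) * yhat N d y
      ((((ψ i : {u : (ZMod (N / d))ˣ // u ∈ T d}) : (ZMod (N / d))ˣ) *
        ((ψ j : {u : (ZMod (N / d))ˣ // u ∈ T d}) : (ZMod (N / d))ˣ)⁻¹ :
          (ZMod (N / d))ˣ) : ZMod (N / d))
    rw [hM]
    rw [entryMain N hN y hy d ((j.1 : ℕ) / d) hdN hd0 (Φ j) (hΦval j) i.1 j.1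
      (Nat.mul_div_cancel' (hdvdI j)).symm]
    rw [if_pos (hdvdI i)]
    congr 1
    have hival : (((i.1 : ℕ) / d : ℕ) : ZMod (N / d)) = ((Φ i : (ZMod (N / d))ˣ) : ZMod (N / d)) :=
      (hΦval i).symm
    rw [hival]
    rw [show ((Φ i : (ZMod (N / d))ˣ) : ZMod (N / d)) *
        (((Φ j)⁻¹ : (ZMod (N / d))ˣ) : ZMod (N / d))
        = (((Φ i * (Φ j)⁻¹ : (ZMod (N / d))ˣ)) : ZMod (N / d)) from (Units.val_mul _ _).symm]
    rcases hψspec i with h1 | h1 <;> rcases hψspec j with h2 | h2 <;> rw [h1, h2]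
    · rw [show (Φ i) * (-Φ j)⁻¹ = -((Φ i) * (Φ j)⁻¹) by rw [inv_neg, mul_neg]]
      rw [Units.val_neg, yhat_neg N d hdN hN0]
    · rw [show (-Φ i) * (Φ j)⁻¹ = -((Φ i) * (Φ j)⁻¹) by rw [neg_mul]]
      rw [Units.val_neg, yhat_neg N d hdN hN0]
    · rw [show (-Φ i) * (-Φ j)⁻¹ = (Φ i) * (Φ j)⁻¹ by rw [inv_neg, neg_mul_neg]]
  rw [hblock, Matrix.det_submatrix_equiv_self σ]
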